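/- Duality principle: Let (X,Z) = HMM(μ, A, C) on finite spaces 𝕊 and 𝕆. Fix an adapted control U ∈ 𝒰 and a σ(Z_1,...,Z_T)-measurable terminal function F : 𝕊 → ℝ. Let (Y, V) solve the backward stochastic difference equation Y_t(x) = (A Y_{t+1})(x) + c(x)ᵀ(U_t + V_t(x)) − V_t(x)ᵀ e(Z_{t+1}), Y_T = F, and define the estimator S_T = μ(Y_0) − ∑_{t=0}^{T-1} U_tᵀ e(Z_{t+1}). Then J_T(U;F) := var(Y_0(X_0)) + E[∑_{t=0}^{T-1} ℓ(Y_{t+1}, V_t, U_t; X_t)] = E[|F(X_T) − S_T|²], where ℓ(y,v,u;x) = (Γy)(x) + (u+v(x))ᵀ R(x) (u+v(x)). -/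

import Mathlib

open Finset

/-- Lattice embedding: `e i` is the `i`-th canonical basis vector of `ℝ^m` for
`1 ≤ i ≤ m`, and `e 0 = -(e 1 + ⋯ + e m)`. -/
def eVec (m : ℕ) (z : Fin (m + 1)) : Fin m → ℝ :=
  fun j => if z.val = 0 then -1 else if z.val = j.val + 1 then 1 else 0

/-- Restriction of a path to its first `t` coordinates. -/
def restrict {T : ℕ} {α : Type*} (zp : Fin T → α) (t : ℕ) (ht : t ≤ T) : Fin t → α :=
  fun s => zp ⟨s.val, lt_of_lt_of_le s.isLt ht⟩

/-- Joint law of `HMM(μ₀, A, C)`: `X = (X_0,…,X_T)` is Markov(μ₀, A) and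
`Z_{t+1} ∣ X_t = x ∼ C(x,·)` for `t = 0,…,T-1` (here `zp t` stands for `Z_{t+1}`). -/
noncomputable def hmmJoint (d m T : ℕ) (μ0 : Fin d → ℝ)
    (A : Matrix (Fin d) (Fin d) ℝ) (C : Fin d → Fin (m + 1) → ℝ)
    (xp : Fin (T + 1) → Fin d) (zp : Fin T → Fin (m + 1)) : ℝ :=
  μ0 (xp 0) * (∏ t : Fin T, A (xp t.castSucc) (xp t.succ)) *
    ∏ t : Fin T, C (xp t.castSucc) (zp t)

/-- `c(x)_i = C(x,i) - C(x,0)`, the mean of `e(Z_{t+1})` given `X_t = x`. -/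
noncomputable def cvec (d m : ℕ) (C : Fin d → Fin (m + 1) → ℝ) (x : Fin d) : Fin m → ℝ :=
  fun i => C x i.succ - C x 0

/-- `R(x) = diag(c(x)) + C(x,0)(I + 𝟏𝟏ᵀ) - c(x)c(x)ᵀ`. -/
noncomputable def Rmat (d m : ℕ) (C : Fin d → Fin (m + 1) → ℝ) (x : Fin d)
    (i j : Fin m) : ℝ :=
  (if i = j then cvec d m C x i else 0) + C x 0 * ((if i = j then 1 else 0) + 1) -
    cvec d m C x i * cvec d m C x j

/-- Carré du champ: `(Γf)(x) = ∑_y A(x,y) f(y)² - ((Af)(x))²`. -/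
noncomputable def Gamma (d : ℕ) (A : Matrix (Fin d) (Fin d) ℝ)
    (f : Fin d → ℝ) (x : Fin d) : ℝ :=
  (∑ y, A x y * (f y) ^ 2) - (∑ y, A x y * f y) ^ 2

/-- Running cost `ℓ(y,v,u;x) = (Γy)(x) + (u + v(x))ᵀ R(x) (u + v(x))`. -/
noncomputable def ell (d m : ℕ) (A : Matrix (Fin d) (Fin d) ℝ)
    (C : Fin d → Fin (m + 1) → ℝ) (y : Fin d → ℝ) (v : Fin d → Fin m → ℝ)
    (u : Fin m → ℝ) (x : Fin d) : ℝ :=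
  Gamma d A y x + ∑ i, ∑ j, (u i + v x i) * Rmat d m C x i j * (u j + v x j)


section Helpers

lemma sum_snoc {n : ℕ} {α : Type*} [Fintype α] (g : (Fin (n + 1) → α) → ℝ) :
    ∑ f : Fin (n + 1) → α, g f = ∑ f : Fin n → α, ∑ a : α, g (Fin.snoc f a) := by
  rw [← (Fin.snocEquiv (fun _ => α)).sum_comp g, Fintype.sum_prod_type, Finset.sum_comm]
  rfl

lemma restrict_snoc {T : ℕ} {α : Type*} (zp : Fin T → α) (z : α) (t : ℕ)
    (ht' : t ≤ T + 1) (ht : t ≤ T) :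
    restrict (Fin.snoc zp z : Fin (T + 1) → α) t ht' = restrict zp t ht := by
  funext s
  have h : restrict (Fin.snoc zp z : Fin (T + 1) → α) t ht' s =
      Fin.snoc (α := fun _ => α) zp z
        (Fin.castSucc (⟨s.val, lt_of_lt_of_le s.isLt ht⟩ : Fin T)) := rfl
  rw [h, Fin.snoc_castSucc]
  rfl

lemma restrict_self {T : ℕ} {α : Type*} (zp : Fin T → α) (h : T ≤ T) :
    restrict zp T h = zp := by
  funext s; exact congrArg zp (Fin.ext rfl)

lemma hmmJoint_snoc (d m T : ℕ) (μ0 : Fin d → ℝ) (A : Matrix (Fin d) (Fin d) ℝ)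
    (C : Fin d → Fin (m + 1) → ℝ) (xp : Fin (T + 1) → Fin d) (zp : Fin T → Fin (m + 1))
    (x : Fin d) (z : Fin (m + 1)) :
    hmmJoint d m (T + 1) μ0 A C (Fin.snoc xp x) (Fin.snoc zp z) =
      hmmJoint d m T μ0 A C xp zp *
        (A (xp (Fin.last T)) x * C (xp (Fin.last T)) z) := by
  unfold hmmJoint
  rw [Fin.prod_univ_castSucc, Fin.prod_univ_castSucc]
  have h0 : (Fin.snoc xp x : Fin (T + 2) → Fin d) 0 = xp 0 := by
    exact Fin.snoc_castSucc (α := fun _ => Fin d) (p := xp) (x := x) (i := 0)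
  simp only [Fin.succ_castSucc, Fin.snoc_castSucc, Fin.succ_last, Fin.snoc_last, h0]
  ring

lemma eVec_succ_apply (m : ℕ) (k i : Fin m) :
    eVec m k.succ i = if i = k then 1 else 0 := by
  simp only [eVec, Fin.val_succ, Nat.succ_ne_zero, if_false]
  by_cases h : i = k
  · subst h; simp
  · rw [if_neg h, if_neg]
    intro hc
    exact h (Fin.ext (by omega)).symm

lemma sum_mul_eVec_succ (m : ℕ) (w : Fin m → ℝ) (k : Fin m) :
    ∑ i, w i * eVec m k.succ i = w k := by
  simp [eVec_succ_apply, mul_ite]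

lemma sum_mul_eVec_zero (m : ℕ) (w : Fin m → ℝ) :
    ∑ i, w i * eVec m 0 i = -∑ i, w i := by
  simp [eVec]

lemma zmean (d m : ℕ) (C : Fin d → Fin (m + 1) → ℝ) (x : Fin d) (w : Fin m → ℝ) :
    ∑ z, C x z * (∑ i, w i * eVec m z i) = ∑ i, w i * cvec d m C x i := by
  rw [Fin.sum_univ_succ]
  simp only [sum_mul_eVec_zero, sum_mul_eVec_succ]
  have h1 : ∑ k : Fin m, C x k.succ * w k = ∑ k : Fin m, w k * C x k.succ :=
    Finset.sum_congr rfl fun i _ => mul_comm _ _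
  simp only [cvec, mul_sub, Finset.sum_sub_distrib, h1]
  rw [← Finset.sum_mul]
  ring

lemma zsq (d m : ℕ) (C : Fin d → Fin (m + 1) → ℝ) (x : Fin d) (w : Fin m → ℝ) :
    ∑ z, C x z * (∑ i, w i * eVec m z i) ^ 2 =
      C x 0 * (∑ i, w i) ^ 2 + ∑ k : Fin m, C x k.succ * (w k) ^ 2 := by
  rw [Fin.sum_univ_succ]
  simp only [sum_mul_eVec_zero, sum_mul_eVec_succ, neg_sq]

lemma fact_R (d m : ℕ) (C : Fin d → Fin (m + 1) → ℝ) (x : Fin d) (w : Fin m → ℝ) :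
    ∑ i, ∑ j, w i * Rmat d m C x i j * w j =
      (C x 0 * (∑ i, w i) ^ 2 + ∑ i, C x i.succ * (w i) ^ 2) -
        (∑ i, w i * cvec d m C x i) ^ 2 := by
  have hij : ∀ i j : Fin m, w i * Rmat d m C x i j * w j =
      (if i = j then w j * cvec d m C x j * w j + C x 0 * (w j * w j) else 0) +
        C x 0 * (w i * w j) - (w i * cvec d m C x i) * (cvec d m C x j * w j) := by
    intro i j
    by_cases h : i = j
    · subst h; simp [Rmat]; ring
    · simp only [Rmat, if_neg h]; ring
  have hrow : ∀ i : Fin m, ∑ j, w i * Rmat d m C x i j * w j =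
      (w i * cvec d m C x i * w i + C x 0 * (w i * w i)) +
        C x 0 * (w i * ∑ j, w j) - (w i * cvec d m C x i) * (∑ j, cvec d m C x j * w j) := by
    intro i
    rw [Finset.sum_congr rfl fun j _ => hij i j]
    rw [Finset.sum_sub_distrib, Finset.sum_add_distrib, Finset.sum_ite_eq, ← Finset.mul_sum,
      ← Finset.mul_sum]
    simp [Finset.mul_sum]
  rw [Finset.sum_congr rfl fun i _ => hrow i]
  rw [Finset.sum_sub_distrib, Finset.sum_add_distrib]
  have e1 : ∑ i : Fin m, (w i * cvec d m C x i * w i + C x 0 * (w i * w i)) =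
      ∑ i : Fin m, C x i.succ * w i ^ 2 :=
    Finset.sum_congr rfl fun i _ => by simp only [cvec]; ring
  have e2 : ∑ i : Fin m, C x 0 * (w i * ∑ j, w j) = C x 0 * (∑ i, w i) ^ 2 := by
    rw [← Finset.mul_sum, ← Finset.sum_mul]; ring
  have e3 : ∑ i : Fin m, (w i * cvec d m C x i) * (∑ j, cvec d m C x j * w j) =
      (∑ i, w i * cvec d m C x i) ^ 2 := by
    rw [← Finset.sum_mul,
      show (∑ j, cvec d m C x j * w j) = ∑ j, w j * cvec d m C x j from
        Finset.sum_congr rfl fun j _ => mul_comm _ _]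
    ring
  rw [e1, e2, e3]
  ring

lemma zvar (d m : ℕ) (C : Fin d → Fin (m + 1) → ℝ) (hC1 : ∀ x, ∑ z, C x z = 1)
    (x : Fin d) (w : Fin m → ℝ) :
    ∑ z, C x z * ((∑ i, w i * eVec m z i) - (∑ i, w i * cvec d m C x i)) ^ 2 =
      ∑ i, ∑ j, w i * Rmat d m C x i j * w j := by
  have hexp : ∀ z : Fin (m + 1),
      C x z * ((∑ i, w i * eVec m z i) - (∑ i, w i * cvec d m C x i)) ^ 2 =
      C x z * (∑ i, w i * eVec m z i) ^ 2 -
        (2 * (∑ i, w i * cvec d m C x i)) * (C x z * (∑ i, w i * eVec m z i)) +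
        (∑ i, w i * cvec d m C x i) ^ 2 * C x z := fun z => by ring
  rw [Finset.sum_congr rfl fun z _ => hexp z, Finset.sum_add_distrib,
    Finset.sum_sub_distrib, ← Finset.mul_sum, ← Finset.mul_sum, zmean, zsq, hC1, fact_R]
  ring

lemma one_step (d m : ℕ) (A : Matrix (Fin d) (Fin d) ℝ) (C : Fin d → Fin (m + 1) → ℝ)
    (hA1 : ∀ x, ∑ y, A x y = 1) (hC1 : ∀ x, ∑ z, C x z = 1)
    (x : Fin d) (s g : ℝ) (u v : Fin m → ℝ) (f : Fin (m + 1) → Fin d → ℝ)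
    (hrel : ∀ z, g = (∑ y, A x y * f z y) +
      (∑ i, cvec d m C x i * (u i + v i)) - ∑ i, v i * eVec m z i) :
    ∑ z, C x z * ∑ y, A x y * (f z y - (s - ∑ i, u i * eVec m z i)) ^ 2 =
      (g - s) ^ 2 + ∑ z, C x z *
        (Gamma d A (f z) x +
          ∑ i, ∑ j, (u i + v i) * Rmat d m C x i j * (u j + v j)) := by
  set w : Fin m → ℝ := fun i => u i + v i with hw
  have hA : ∀ (φ : Fin d → ℝ) (r : ℝ), ∑ y, A x y * (φ y - r) ^ 2 =
      Gamma d A φ x + ((∑ y, A x y * φ y) - r) ^ 2 := by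
    intro φ r
    have h : ∀ y, A x y * (φ y - r) ^ 2 =
        A x y * (φ y) ^ 2 - (2 * r) * (A x y * φ y) + r ^ 2 * A x y := fun y => by ring
    rw [Finset.sum_congr rfl fun y _ => h y, Finset.sum_add_distrib, Finset.sum_sub_distrib,
      ← Finset.mul_sum, ← Finset.mul_sum, hA1]
    unfold Gamma; ring
  have hmean : ∀ z : Fin (m + 1), (∑ y, A x y * f z y) - (s - ∑ i, u i * eVec m z i) =
      (g - s) + ((∑ i, w i * eVec m z i) - (∑ i, w i * cvec d m C x i)) := by
    intro z
    have h1 : ∑ i, w i * eVec m z i =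
        (∑ i, u i * eVec m z i) + ∑ i, v i * eVec m z i := by
      rw [← Finset.sum_add_distrib]
      exact Finset.sum_congr rfl fun i _ => by simp only [hw]; ring
    have h2 : ∑ i, w i * cvec d m C x i = ∑ i, cvec d m C x i * (u i + v i) :=
      Finset.sum_congr rfl fun i _ => by simp only [hw]; ring
    rw [h1, h2, hrel z]; ring
  have hstep : ∀ z : Fin (m + 1),
      C x z * ∑ y, A x y * (f z y - (s - ∑ i, u i * eVec m z i)) ^ 2 =
      C x z * Gamma d A (f z) x + (g - s) ^ 2 * C x z +
        (2 * (g - s)) * (C x z * ((∑ i, w i * eVec m z i) - (∑ i, w i * cvec d m C x i))) +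
        C x z * ((∑ i, w i * eVec m z i) - (∑ i, w i * cvec d m C x i)) ^ 2 := by
    intro z
    rw [hA (f z) _, hmean z]
    ring
  rw [Finset.sum_congr rfl fun z _ => hstep z]
  rw [Finset.sum_add_distrib, Finset.sum_add_distrib, Finset.sum_add_distrib,
    ← Finset.mul_sum, ← Finset.mul_sum]
  have hz : ∑ z, C x z * ((∑ i, w i * eVec m z i) - (∑ i, w i * cvec d m C x i)) = 0 := by
    have h : ∀ z : Fin (m + 1),
        C x z * ((∑ i, w i * eVec m z i) - (∑ i, w i * cvec d m C x i)) =
        C x z * (∑ i, w i * eVec m z i) - (∑ i, w i * cvec d m C x i) * C x z :=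
      fun z => by ring
    rw [Finset.sum_congr rfl fun z _ => h z, Finset.sum_sub_distrib, zmean,
      ← Finset.mul_sum, hC1]
    ring
  rw [hz, zvar d m C hC1 x w, hC1]
  have hR : ∑ z, C x z * (Gamma d A (f z) x +
      ∑ i, ∑ j, (u i + v i) * Rmat d m C x i j * (u j + v j)) =
      (∑ z, C x z * Gamma d A (f z) x) +
        ∑ i, ∑ j, w i * Rmat d m C x i j * w j := by
    rw [Finset.sum_congr rfl fun z _ => mul_add (C x z) _ _, Finset.sum_add_distrib,
      ← Finset.sum_mul, hC1]
    simp only [hw]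
    ring
  rw [hR]
  ring

lemma joint_sum_snoc (d m T : ℕ) (μ0 : Fin d → ℝ) (A : Matrix (Fin d) (Fin d) ℝ)
    (C : Fin d → Fin (m + 1) → ℝ)
    (H : (Fin (T + 2) → Fin d) → (Fin (T + 1) → Fin (m + 1)) → ℝ) :
    ∑ xp : Fin (T + 2) → Fin d, ∑ zp : Fin (T + 1) → Fin (m + 1),
        hmmJoint d m (T + 1) μ0 A C xp zp * H xp zp =
      ∑ xp : Fin (T + 1) → Fin d, ∑ zp : Fin T → Fin (m + 1),
        hmmJoint d m T μ0 A C xp zp *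
          ∑ x : Fin d, ∑ z : Fin (m + 1),
            A (xp (Fin.last T)) x * C (xp (Fin.last T)) z *
              H (Fin.snoc xp x) (Fin.snoc zp z) := by
  rw [sum_snoc]
  refine Finset.sum_congr rfl fun xp _ => ?_
  rw [Finset.sum_congr rfl fun x _ => sum_snoc
    (fun zp => hmmJoint d m (T + 1) μ0 A C (Fin.snoc xp x) zp * H (Fin.snoc xp x) zp)]
  rw [Finset.sum_comm]
  refine Finset.sum_congr rfl fun zp _ => ?_
  rw [Finset.mul_sum]
  refine Finset.sum_congr rfl fun x _ => ?_
  rw [Finset.mul_sum]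
  refine Finset.sum_congr rfl fun z _ => ?_
  rw [hmmJoint_snoc]
  ring

lemma sum_weight_add {n : ℕ} (c : Fin n → ℝ) (hc : ∑ z, c z = 1) (a S : ℝ)
    (L : Fin n → ℝ) :
    ∑ z, a * c z * (S + L z) = a * (S + ∑ z, c z * L z) := by
  have h : ∀ z, a * c z * (S + L z) = (a * S) * c z + a * (c z * L z) := fun z => by ring
  rw [Finset.sum_congr rfl fun z _ => h z, Finset.sum_add_distrib, ← Finset.mul_sum,
    ← Finset.mul_sum, hc]
  ring

end Helpers

theorem duality_aux (d m : ℕ) (μ0 : Fin d → ℝ) (A : Matrix (Fin d) (Fin d) ℝ)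
    (C : Fin d → Fin (m + 1) → ℝ)
    (hμ1 : ∑ x, μ0 x = 1) (hA1 : ∀ x, ∑ y, A x y = 1) (hC1 : ∀ x, ∑ z, C x z = 1)
    (U : (t : ℕ) → (Fin t → Fin (m + 1)) → Fin m → ℝ)
    (Y : (t : ℕ) → (Fin t → Fin (m + 1)) → Fin d → ℝ)
    (V : (t : ℕ) → (Fin t → Fin (m + 1)) → Fin d → Fin m → ℝ) :
    ∀ (T : ℕ) (F : (Fin T → Fin (m + 1)) → Fin d → ℝ),
      (∀ (zp : Fin T → Fin (m + 1)) (t : Fin T) (x : Fin d),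
        Y t.val (restrict zp t.val t.isLt.le) x =
          (∑ y, A x y * Y (t.val + 1) (restrict zp (t.val + 1) t.isLt) y) +
          (∑ i, cvec d m C x i *
            (U t.val (restrict zp t.val t.isLt.le) i +
             V t.val (restrict zp t.val t.isLt.le) x i)) -
          ∑ i, V t.val (restrict zp t.val t.isLt.le) x i * eVec m (zp t) i) →
      Y T = F →
      ((∑ x, μ0 x * (Y 0 (fun i => i.elim0) x) ^ 2) -
          (∑ x, μ0 x * Y 0 (fun i => i.elim0) x) ^ 2) +
        (∑ xp : Fin (T + 1) → Fin d, ∑ zp : Fin T → Fin (m + 1),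
          hmmJoint d m T μ0 A C xp zp *
            ∑ t : Fin T,
              ell d m A C (Y (t.val + 1) (restrict zp (t.val + 1) t.isLt))
                (V t.val (restrict zp t.val t.isLt.le))
                (U t.val (restrict zp t.val t.isLt.le)) (xp t.castSucc)) =
      ∑ xp : Fin (T + 1) → Fin d, ∑ zp : Fin T → Fin (m + 1),
        hmmJoint d m T μ0 A C xp zp *
          (F zp (xp (Fin.last T)) -
            ((∑ x, μ0 x * Y 0 (fun i => i.elim0) x) -
              ∑ t : Fin T, ∑ i,
                U t.val (restrict zp t.val t.isLt.le) i * eVec m (zp t) i)) ^ 2 := by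
  intro T
  induction T with
  | zero =>
    intro F hB ht
    subst ht
    simp only [Finset.univ_eq_empty, Finset.sum_empty, mul_zero, Finset.sum_const_zero,
      add_zero, sub_zero]
    have hx0 : ∀ xp : Fin 1 → Fin d, xp (Fin.last 0) = xp 0 :=
      fun xp => congrArg xp (Subsingleton.elim _ _)
    have hJ : ∀ (xp : Fin 1 → Fin d) (zp : Fin 0 → Fin (m + 1)),
        hmmJoint d m 0 μ0 A C xp zp = μ0 (xp 0) := by
      intro xp zp; unfold hmmJoint; simp
    have key : ∀ xp : Fin 1 → Fin d,
        ∑ zp : Fin 0 → Fin (m + 1), hmmJoint d m 0 μ0 A C xp zp *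
          (Y 0 zp (xp (Fin.last 0)) - ∑ x, μ0 x * Y 0 (fun i => i.elim0) x) ^ 2 =
        μ0 (xp 0) * (Y 0 (fun i => i.elim0) (xp 0) -
          ∑ x, μ0 x * Y 0 (fun i => i.elim0) x) ^ 2 := by
      intro xp
      rw [Fintype.sum_subsingleton _ (fun i : Fin 0 => i.elim0)]
      rw [hJ, hx0 xp]
    rw [Finset.sum_congr rfl fun xp _ => key xp]
    rw [Fintype.sum_equiv (Equiv.funUnique (Fin 1) (Fin d))
      (fun xp : Fin 1 → Fin d => μ0 (xp 0) * (Y 0 (fun i => i.elim0) (xp 0) -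
        ∑ x, μ0 x * Y 0 (fun i => i.elim0) x) ^ 2)
      (fun x : Fin d => μ0 x * (Y 0 (fun i => i.elim0) x -
        ∑ x, μ0 x * Y 0 (fun i => i.elim0) x) ^ 2)
      (fun xp => rfl)]
    have hpt : ∀ x : Fin d, μ0 x * (Y 0 (fun i => i.elim0) x -
        ∑ x, μ0 x * Y 0 (fun i => i.elim0) x) ^ 2 =
        μ0 x * (Y 0 (fun i => i.elim0) x) ^ 2 -
          (2 * ∑ x, μ0 x * Y 0 (fun i => i.elim0) x) * (μ0 x * Y 0 (fun i => i.elim0) x) +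
          (∑ x, μ0 x * Y 0 (fun i => i.elim0) x) ^ 2 * μ0 x := fun x => by ring
    rw [Finset.sum_congr rfl fun x _ => hpt x, Finset.sum_add_distrib,
      Finset.sum_sub_distrib, ← Finset.mul_sum, ← Finset.mul_sum, hμ1]
    ring
  | succ T ih =>
    intro F hB ht
    have hB' : ∀ (zp : Fin T → Fin (m + 1)) (t : Fin T) (x : Fin d),
        Y t.val (restrict zp t.val t.isLt.le) x =
          (∑ y, A x y * Y (t.val + 1) (restrict zp (t.val + 1) t.isLt) y) +
          (∑ i, cvec d m C x i *
            (U t.val (restrict zp t.val t.isLt.le) i +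
             V t.val (restrict zp t.val t.isLt.le) x i)) -
          ∑ i, V t.val (restrict zp t.val t.isLt.le) x i * eVec m (zp t) i := by
      intro zp t x
      have h := hB (Fin.snoc zp 0) t.castSucc x
      simp only [Fin.coe_castSucc, Fin.snoc_castSucc] at h
      rwa [restrict_snoc zp 0 t.val (by omega) t.isLt.le,
        restrict_snoc zp 0 (t.val + 1) (by omega) t.isLt] at h
    have ihres := ih (fun zp => Y T zp) hB' rfl
    rw [joint_sum_snoc d m T μ0 A C, joint_sum_snoc d m T μ0 A C]
    -- pointwise (per history) identities
    have hLkey : ∀ (xp : Fin (T + 1) → Fin d) (zp : Fin T → Fin (m + 1)),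
        (∑ x : Fin d, ∑ z : Fin (m + 1),
          A (xp (Fin.last T)) x * C (xp (Fin.last T)) z *
            ∑ t : Fin (T + 1),
              ell d m A C (Y (t.val + 1) (restrict (Fin.snoc zp z : Fin (T + 1) → Fin (m + 1)) (t.val + 1) t.isLt))
                (V t.val (restrict (Fin.snoc zp z : Fin (T + 1) → Fin (m + 1)) t.val t.isLt.le))
                (U t.val (restrict (Fin.snoc zp z : Fin (T + 1) → Fin (m + 1)) t.val t.isLt.le))
                ((Fin.snoc xp x : Fin (T + 2) → Fin d) t.castSucc)) =
        (∑ t : Fin T,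
          ell d m A C (Y (t.val + 1) (restrict zp (t.val + 1) t.isLt))
            (V t.val (restrict zp t.val t.isLt.le))
            (U t.val (restrict zp t.val t.isLt.le)) (xp t.castSucc)) +
        ∑ z : Fin (m + 1), C (xp (Fin.last T)) z *
          ell d m A C (F (Fin.snoc zp z : Fin (T + 1) → Fin (m + 1))) (V T zp) (U T zp) (xp (Fin.last T)) := by
      intro xp zp
      have hresA : ∀ (z : Fin (m + 1)) (t : Fin T) (p : (t.val : ℕ) ≤ T + 1),
          restrict (Fin.snoc zp z : Fin (T + 1) → Fin (m + 1)) t.val p =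
            restrict zp t.val t.isLt.le := fun z t p => restrict_snoc _ _ _ _ _
      have hresB : ∀ (z : Fin (m + 1)) (t : Fin T) (p : t.val + 1 ≤ T + 1),
          restrict (Fin.snoc zp z : Fin (T + 1) → Fin (m + 1)) (t.val + 1) p =
            restrict zp (t.val + 1) t.isLt := fun z t p => restrict_snoc _ _ _ _ _
      have hresC : ∀ (z : Fin (m + 1)) (p : T ≤ T + 1),
          restrict (Fin.snoc zp z : Fin (T + 1) → Fin (m + 1)) T p = zp :=
        fun z p => (restrict_snoc zp z T p le_rfl).trans (restrict_self zp le_rfl)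
      have hresD : ∀ (z : Fin (m + 1)) (p : T + 1 ≤ T + 1),
          restrict (Fin.snoc zp z : Fin (T + 1) → Fin (m + 1)) (T + 1) p = Fin.snoc zp z :=
        fun z p => restrict_self _ _
      have hsplit : ∀ (x : Fin d) (z : Fin (m + 1)),
          (∑ t : Fin (T + 1),
            ell d m A C (Y (t.val + 1) (restrict (Fin.snoc zp z : Fin (T + 1) → Fin (m + 1)) (t.val + 1) t.isLt))
              (V t.val (restrict (Fin.snoc zp z : Fin (T + 1) → Fin (m + 1)) t.val t.isLt.le))
              (U t.val (restrict (Fin.snoc zp z : Fin (T + 1) → Fin (m + 1)) t.val t.isLt.le))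
              ((Fin.snoc xp x : Fin (T + 2) → Fin d) t.castSucc)) =
          (∑ t : Fin T,
            ell d m A C (Y (t.val + 1) (restrict zp (t.val + 1) t.isLt))
              (V t.val (restrict zp t.val t.isLt.le))
              (U t.val (restrict zp t.val t.isLt.le)) (xp t.castSucc)) +
          ell d m A C (F (Fin.snoc zp z : Fin (T + 1) → Fin (m + 1))) (V T zp) (U T zp) (xp (Fin.last T)) := by
        intro x z
        rw [Fin.sum_univ_castSucc]
        simp only [Fin.coe_castSucc, Fin.val_last, Fin.snoc_castSucc, hresA, hresB,
          hresC, hresD, ht]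
      have h1 : ∀ x : Fin d,
          (∑ z : Fin (m + 1), A (xp (Fin.last T)) x * C (xp (Fin.last T)) z *
            ∑ t : Fin (T + 1),
              ell d m A C (Y (t.val + 1) (restrict (Fin.snoc zp z : Fin (T + 1) → Fin (m + 1)) (t.val + 1) t.isLt))
                (V t.val (restrict (Fin.snoc zp z : Fin (T + 1) → Fin (m + 1)) t.val t.isLt.le))
                (U t.val (restrict (Fin.snoc zp z : Fin (T + 1) → Fin (m + 1)) t.val t.isLt.le))
                ((Fin.snoc xp x : Fin (T + 2) → Fin d) t.castSucc)) =
          A (xp (Fin.last T)) x *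
            ((∑ t : Fin T,
              ell d m A C (Y (t.val + 1) (restrict zp (t.val + 1) t.isLt))
                (V t.val (restrict zp t.val t.isLt.le))
                (U t.val (restrict zp t.val t.isLt.le)) (xp t.castSucc)) +
             ∑ z : Fin (m + 1), C (xp (Fin.last T)) z *
               ell d m A C (F (Fin.snoc zp z : Fin (T + 1) → Fin (m + 1))) (V T zp) (U T zp) (xp (Fin.last T))) := by
        intro x
        rw [Finset.sum_congr rfl fun z _ => by rw [hsplit x z]]
        exact sum_weight_add _ (hC1 _) _ _ _
      rw [Finset.sum_congr rfl fun x _ => h1 x, ← Finset.sum_mul, hA1, one_mul]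
    have hRkey : ∀ (xp : Fin (T + 1) → Fin d) (zp : Fin T → Fin (m + 1)),
        (∑ x : Fin d, ∑ z : Fin (m + 1),
          A (xp (Fin.last T)) x * C (xp (Fin.last T)) z *
            (F (Fin.snoc zp z : Fin (T + 1) → Fin (m + 1))
                ((Fin.snoc xp x : Fin (T + 2) → Fin d) (Fin.last (T + 1))) -
              ((∑ x, μ0 x * Y 0 (fun i => i.elim0) x) -
                ∑ t : Fin (T + 1), ∑ i,
                  U t.val (restrict (Fin.snoc zp z : Fin (T + 1) → Fin (m + 1))
                    t.val t.isLt.le) i *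
                    eVec m ((Fin.snoc zp z : Fin (T + 1) → Fin (m + 1)) t) i)) ^ 2) =
        (Y T zp (xp (Fin.last T)) -
          ((∑ x, μ0 x * Y 0 (fun i => i.elim0) x) -
            ∑ t : Fin T, ∑ i,
              U t.val (restrict zp t.val t.isLt.le) i * eVec m (zp t) i)) ^ 2 +
        ∑ z : Fin (m + 1), C (xp (Fin.last T)) z *
          ell d m A C (F (Fin.snoc zp z : Fin (T + 1) → Fin (m + 1)))
            (V T zp) (U T zp) (xp (Fin.last T)) := by
      intro xp zp
      have hresA : ∀ (z : Fin (m + 1)) (t : Fin T) (p : (t.val : ℕ) ≤ T + 1),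
          restrict (Fin.snoc zp z : Fin (T + 1) → Fin (m + 1)) t.val p =
            restrict zp t.val t.isLt.le := fun z t p => restrict_snoc _ _ _ _ _
      have hresC : ∀ (z : Fin (m + 1)) (p : T ≤ T + 1),
          restrict (Fin.snoc zp z : Fin (T + 1) → Fin (m + 1)) T p = zp :=
        fun z p => (restrict_snoc zp z T p le_rfl).trans (restrict_self zp le_rfl)
      have hresD : ∀ (z : Fin (m + 1)) (p : T + 1 ≤ T + 1),
          restrict (Fin.snoc zp z : Fin (T + 1) → Fin (m + 1)) (T + 1) p = Fin.snoc zp z :=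
        fun z p => restrict_self _ _
      have hS : ∀ z : Fin (m + 1),
          (∑ t : Fin (T + 1), ∑ i,
            U t.val (restrict (Fin.snoc zp z : Fin (T + 1) → Fin (m + 1))
              t.val t.isLt.le) i *
              eVec m ((Fin.snoc zp z : Fin (T + 1) → Fin (m + 1)) t) i) =
          (∑ t : Fin T, ∑ i,
            U t.val (restrict zp t.val t.isLt.le) i * eVec m (zp t) i) +
          ∑ i, U T zp i * eVec m z i := by
        intro z
        rw [Fin.sum_univ_castSucc]
        simp only [Fin.coe_castSucc, Fin.val_last, Fin.snoc_castSucc, Fin.snoc_last,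
          hresA, hresC]
      have hrel : ∀ z : Fin (m + 1), Y T zp (xp (Fin.last T)) =
          (∑ y, A (xp (Fin.last T)) y *
            F (Fin.snoc zp z : Fin (T + 1) → Fin (m + 1)) y) +
          (∑ i, cvec d m C (xp (Fin.last T)) i *
            (U T zp i + V T zp (xp (Fin.last T)) i)) -
          ∑ i, V T zp (xp (Fin.last T)) i * eVec m z i := by
        intro z
        have h := hB (Fin.snoc zp z) (Fin.last T) (xp (Fin.last T))
        simp only [Fin.val_last, hresC, hresD, ht, Fin.snoc_last] at h
        exact h
      have hos := one_step d m A C hA1 hC1 (xp (Fin.last T))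
        ((∑ x, μ0 x * Y 0 (fun i => i.elim0) x) -
          ∑ t : Fin T, ∑ i, U t.val (restrict zp t.val t.isLt.le) i * eVec m (zp t) i)
        (Y T zp (xp (Fin.last T))) (U T zp) (V T zp (xp (Fin.last T)))
        (fun z => F (Fin.snoc zp z : Fin (T + 1) → Fin (m + 1))) hrel
      have hpt : ∀ (x : Fin d) (z : Fin (m + 1)),
          A (xp (Fin.last T)) x * C (xp (Fin.last T)) z *
            (F (Fin.snoc zp z : Fin (T + 1) → Fin (m + 1))
                ((Fin.snoc xp x : Fin (T + 2) → Fin d) (Fin.last (T + 1))) -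
              ((∑ x, μ0 x * Y 0 (fun i => i.elim0) x) -
                ∑ t : Fin (T + 1), ∑ i,
                  U t.val (restrict (Fin.snoc zp z : Fin (T + 1) → Fin (m + 1))
                    t.val t.isLt.le) i *
                    eVec m ((Fin.snoc zp z : Fin (T + 1) → Fin (m + 1)) t) i)) ^ 2 =
          C (xp (Fin.last T)) z * (A (xp (Fin.last T)) x *
            (F (Fin.snoc zp z : Fin (T + 1) → Fin (m + 1)) x -
              (((∑ x, μ0 x * Y 0 (fun i => i.elim0) x) -
                ∑ t : Fin T, ∑ i,
                  U t.val (restrict zp t.val t.isLt.le) i * eVec m (zp t) i) -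
                ∑ i, U T zp i * eVec m z i)) ^ 2) := by
        intro x z
        rw [Fin.snoc_last, hS z]
        ring
      rw [Finset.sum_congr rfl fun x _ => Finset.sum_congr rfl fun z _ => hpt x z]
      rw [Finset.sum_comm]
      rw [Finset.sum_congr rfl fun z (_ : z ∈ Finset.univ) => (Finset.mul_sum
        Finset.univ (fun x => A (xp (Fin.last T)) x *
          (F (Fin.snoc zp z : Fin (T + 1) → Fin (m + 1)) x -
            (((∑ x, μ0 x * Y 0 (fun i => i.elim0) x) -
              ∑ t : Fin T, ∑ i,
                U t.val (restrict zp t.val t.isLt.le) i * eVec m (zp t) i) -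
              ∑ i, U T zp i * eVec m z i)) ^ 2)
        (C (xp (Fin.last T)) z)).symm]
      rw [hos]
      simp only [ell]
    -- final assembly
    rw [Finset.sum_congr rfl fun xp (_ : xp ∈ Finset.univ) =>
      Finset.sum_congr rfl fun zp _ => by rw [hLkey xp zp, mul_add]]
    rw [Finset.sum_congr rfl fun xp (_ : xp ∈ Finset.univ) =>
      Finset.sum_add_distrib, Finset.sum_add_distrib]
    simp only [hRkey, mul_add, Finset.sum_add_distrib]
    linarith [ihres]

/-- Duality principle: for any adapted control `U` and any adapted solution
`(Y,V)` of the BSΔE `Y_t(x) = (AY_{t+1})(x) + c(x)ᵀ(U_t + V_t(x)) - V_t(x)ᵀ e(Z_{t+1})`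
with terminal condition `Y_T = F`, the control cost
`J_T(U;F) = var(Y_0(X_0)) + E[∑_t ℓ(Y_{t+1},V_t,U_t;X_t)]` equals the
mean-squared error `E[|F(X_T) - S_T|²]` of the estimator
`S_T = μ(Y_0) - ∑_t U_tᵀ e(Z_{t+1})`. -/
theorem duality_principle (d m T : ℕ)
    (μ0 : Fin d → ℝ) (A : Matrix (Fin d) (Fin d) ℝ) (C : Fin d → Fin (m + 1) → ℝ)
    (hμ0 : ∀ x, 0 ≤ μ0 x) (hμ1 : ∑ x, μ0 x = 1)
    (hA0 : ∀ x y, 0 ≤ A x y) (hA1 : ∀ x, ∑ y, A x y = 1)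
    (hC0 : ∀ x z, 0 ≤ C x z) (hC1 : ∀ x, ∑ z, C x z = 1)
    -- adapted control, BSΔE solution pair, and terminal condition (all given as
    -- functions of the observation history, i.e., adapted processes):
    (U : (t : ℕ) → (Fin t → Fin (m + 1)) → Fin m → ℝ)
    (Y : (t : ℕ) → (Fin t → Fin (m + 1)) → Fin d → ℝ)
    (V : (t : ℕ) → (Fin t → Fin (m + 1)) → Fin d → Fin m → ℝ)
    (F : (Fin T → Fin (m + 1)) → Fin d → ℝ)
    (hBSDE : ∀ (zp : Fin T → Fin (m + 1)) (t : Fin T) (x : Fin d),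
      Y t.val (restrict zp t.val t.isLt.le) x =
        (∑ y, A x y * Y (t.val + 1) (restrict zp (t.val + 1) t.isLt) y) +
        (∑ i, cvec d m C x i *
          (U t.val (restrict zp t.val t.isLt.le) i +
           V t.val (restrict zp t.val t.isLt.le) x i)) -
        ∑ i, V t.val (restrict zp t.val t.isLt.le) x i * eVec m (zp t) i)
    (hterm : Y T = F) :
    -- var(Y₀(X₀))
    ((∑ x, μ0 x * (Y 0 (fun i => i.elim0) x) ^ 2) -
        (∑ x, μ0 x * Y 0 (fun i => i.elim0) x) ^ 2) +
      -- E[∑_t ℓ(Y_{t+1}, V_t, U_t; X_t)]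
      (∑ xp : Fin (T + 1) → Fin d, ∑ zp : Fin T → Fin (m + 1),
        hmmJoint d m T μ0 A C xp zp *
          ∑ t : Fin T,
            ell d m A C (Y (t.val + 1) (restrict zp (t.val + 1) t.isLt))
              (V t.val (restrict zp t.val t.isLt.le))
              (U t.val (restrict zp t.val t.isLt.le)) (xp t.castSucc)) =
    -- E[|F(X_T) - S_T|²]
    ∑ xp : Fin (T + 1) → Fin d, ∑ zp : Fin T → Fin (m + 1),
      hmmJoint d m T μ0 A C xp zp *
        (F zp (xp (Fin.last T)) -
          ((∑ x, μ0 x * Y 0 (fun i => i.elim0) x) -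
            ∑ t : Fin T, ∑ i,
              U t.val (restrict zp t.val t.isLt.le) i * eVec m (zp t) i)) ^ 2 := by
  exact duality_aux d m μ0 A C hμ1 hA1 hC1 U Y V T F hBSDE hterm
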